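/- Let p, v, x, y be real numbers with p > 1, v > 1, x ≥ 0 and y > 0, and set T = y · v^(1/(1−p)) · (1 − v^(p/(1−p)))^(−1/p) (real powers). Then: (a) if x ≤ T, then for every b ∈ [0, x] one has (x^p + y^p)^(1/p) ≤ b/v + ((x−b)^p + y^p)^(1/p); and (b) if x ≥ T, then (x − T)/v + (T^p + y^p)^(1/p) ≤ (x^p + y^p)^(1/p). -/

import Mathlib

open Real

/-- Two-term Hölder with normalized right factor. -/
lemma holder2' {p q a b c d : ℝ} (hpq : Real.HolderConjugate p q)
    (ha : 0 ≤ a) (hb : 0 ≤ b) (hc : 0 ≤ c) (hd : 0 ≤ d)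
    (hab : 0 < a ^ p + b ^ p) (hcd : c ^ q + d ^ q = 1) :
    a * c + b * d ≤ (a ^ p + b ^ p) ^ (1 / p) := by
  set S : ℝ := (a ^ p + b ^ p) ^ (1 / p) with hS
  have hSpos : 0 < S := Real.rpow_pos_of_pos hab _
  have hSp : S ^ p = a ^ p + b ^ p := by
    rw [hS, one_div, Real.rpow_inv_rpow hab.le hpq.ne_zero]
  have h1 : (a / S) * c ≤ (a / S) ^ p / p + c ^ q / q :=
    Real.young_inequality_of_nonneg (by positivity) hc hpq
  have h2 : (b / S) * d ≤ (b / S) ^ p / p + d ^ q / q :=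
    Real.young_inequality_of_nonneg (by positivity) hd hpq
  have hda : (a / S) ^ p = a ^ p / S ^ p := Real.div_rpow ha hSpos.le _
  have hdb : (b / S) ^ p = b ^ p / S ^ p := Real.div_rpow hb hSpos.le _
  have hsum : (a * c + b * d) / S ≤ 1 := by
    have := add_le_add h1 h2
    rw [hda, hdb] at this
    have key : a ^ p / S ^ p / p + c ^ q / q + (b ^ p / S ^ p / p + d ^ q / q) = 1 := by
      have e : a ^ p / S ^ p / p + c ^ q / q + (b ^ p / S ^ p / p + d ^ q / q)
          = (a ^ p + b ^ p) / (a ^ p + b ^ p) / p + (c ^ q + d ^ q) / q := by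
        rw [hSp]; ring
      rw [e, div_self hab.ne', hcd, one_div, one_div]
      exact hpq.inv_add_inv_eq_one
    calc (a * c + b * d) / S = (a / S) * c + (b / S) * d := by ring
      _ ≤ _ := this
      _ = 1 := key
  calc a * c + b * d = ((a * c + b * d) / S) * S := by field_simp
    _ ≤ 1 * S := by nlinarith
    _ = S := one_mul S

set_option maxHeartbeats 1000000 in
/-- With `T = y · v^(1/(1-p)) · (1 - v^(p/(1-p)))^(-1/p)`:
(a) if `x ≤ T` the direct path beats any highway entry `b ∈ [0,x]`;
(b) if `x ≥ T` the path entering the highway at offset `T` beats the direct path. -/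
theorem stmt_4 (p v x y : ℝ) (hp : 1 < p) (hv : 1 < v) (hx : 0 ≤ x) (hy : 0 < y) :
    let T : ℝ := y * v ^ (1 / (1 - p)) * (1 - v ^ (p / (1 - p))) ^ (-1 / p)
    (x ≤ T → ∀ b ∈ Set.Icc (0:ℝ) x,
        (x ^ p + y ^ p) ^ (1 / p) ≤ b / v + ((x - b) ^ p + y ^ p) ^ (1 / p)) ∧
    (T ≤ x →
        (x - T) / v + (T ^ p + y ^ p) ^ (1 / p) ≤ (x ^ p + y ^ p) ^ (1 / p)) := by
  intro T
  have hT : T = y * v ^ (1 / (1 - p)) * (1 - v ^ (p / (1 - p))) ^ (-1 / p) := rfl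
  clear_value T
  have hp0 : (0:ℝ) < p := lt_trans one_pos hp
  have hpne : p ≠ 0 := hp0.ne'
  have h1p : 1 - p < 0 := by linarith
  have h1p' : (1:ℝ) - p ≠ 0 := ne_of_lt h1p
  set q : ℝ := p / (p - 1) with hqdef
  have hpq : Real.HolderConjugate p q := Real.HolderConjugate.conjExponent hp
  have hv0 : (0:ℝ) < v := lt_trans one_pos hv
  set w : ℝ := v ^ (p / (1 - p)) with hwdef
  have hw0 : 0 < w := Real.rpow_pos_of_pos hv0 _
  have hw1 : w < 1 := Real.rpow_lt_one_of_one_lt_of_neg hv (div_neg_of_pos_of_neg hp0 h1p)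
  have h1w : (0:ℝ) < 1 - w := by linarith
  have hnq : -q = p / (1 - p) := by
    rw [hqdef, show (1:ℝ) - p = -(p - 1) by ring, div_neg]
  have hcq : (v⁻¹) ^ q = w := by
    rw [← Real.rpow_neg_one v, ← Real.rpow_mul hv0.le, hwdef, ← hnq]
    norm_num
  set dd : ℝ := (1 - w) ^ (1 / q) with hdd
  clear_value q w dd
  have hdd0 : 0 ≤ dd := by rw [hdd]; positivity
  have hdq : dd ^ q = 1 - w := by
    rw [hdd, one_div, Real.rpow_inv_rpow h1w.le hpq.symm.ne_zero]
  have hcd : (v⁻¹) ^ q + dd ^ q = 1 := by rw [hcq, hdq]; ring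
  have hA0 : (0:ℝ) < v ^ (1 / (1 - p)) := Real.rpow_pos_of_pos hv0 _
  have hB0 : (0:ℝ) < (1 - w) ^ (-1 / p) := Real.rpow_pos_of_pos h1w _
  have hT0 : 0 < T := by rw [hT]; positivity
  have hAp : (v ^ (1 / (1 - p))) ^ p = w := by
    rw [← Real.rpow_mul hv0.le, show 1 / (1 - p) * p = p / (1 - p) by ring, hwdef]
  have hBp : ((1 - w) ^ (-1 / p)) ^ p = (1 - w)⁻¹ := by
    rw [← Real.rpow_mul h1w.le, div_mul_cancel₀ _ hpne, Real.rpow_neg_one]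
  have hTp : T ^ p = y ^ p * (w * (1 - w)⁻¹) := by
    rw [hT, Real.mul_rpow (by positivity) hB0.le, Real.mul_rpow hy.le hA0.le, hAp, hBp]
    ring
  have hTy : T ^ p + y ^ p = y ^ p / (1 - w) := by
    rw [hTp]; field_simp; ring
  have hR : (T ^ p + y ^ p) ^ (1 / p) = y * (1 - w) ^ (-1 / p) := by
    rw [hTy, Real.div_rpow (by positivity) h1w.le, one_div, Real.rpow_rpow_inv hy.le hpne,
      show (-1:ℝ) / p = -(p⁻¹) by ring, Real.rpow_neg h1w.le, div_eq_mul_inv]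
  have hAv : v ^ (1 / (1 - p)) * v⁻¹ = w := by
    rw [← Real.rpow_neg_one v, ← Real.rpow_add hv0, hwdef]
    congr 1
    field_simp
    ring
  have hdB : dd = (1 - w) * (1 - w) ^ (-1 / p) := by
    rw [hdd, show (1 - w) * (1 - w) ^ (-1 / p) = (1 - w) ^ (1:ℝ) * (1 - w) ^ (-1 / p) by
      rw [Real.rpow_one], ← Real.rpow_add h1w]
    congr 1
    rw [hqdef]
    field_simp
    ring
  have hE : y * (1 - w) ^ (-1 / p) = T * v⁻¹ + y * dd := by
    rw [hT, hdB]
    have h1 : y * v ^ (1 / (1 - p)) * (1 - w) ^ (-1 / p) * v⁻¹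
        = y * (1 - w) ^ (-1 / p) * w := by
      rw [← hAv]; ring
    rw [h1]; ring
  constructor
  · -- part (a)
    intro hxT b hb
    obtain ⟨hb0, hbx⟩ := hb
    rcases eq_or_lt_of_le hx with hx0 | hx0
    · have hb' : b = 0 := le_antisymm (hbx.trans hx0.symm.le) hb0
      subst hb'
      simp
    · set t : ℝ := x - b with ht
      have ht0 : 0 ≤ t := by rw [ht]; linarith
      set S : ℝ := (x ^ p + y ^ p) ^ (1 / p) with hSdef
      have hxyp : 0 < x ^ p + y ^ p :=
        add_pos (Real.rpow_pos_of_pos hx0 p) (Real.rpow_pos_of_pos hy p)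
      have hS0 : 0 < S := Real.rpow_pos_of_pos hxyp _
      have hSp : S ^ p = x ^ p + y ^ p := by
        rw [hSdef, one_div, Real.rpow_inv_rpow hxyp.le hpne]
      set c' : ℝ := (x / S) ^ (p - 1) with hc'
      set d' : ℝ := (y / S) ^ (p - 1) with hd'
      clear_value t S c' d'
      have hc'0 : 0 ≤ c' := by rw [hc']; positivity
      have hd'0 : 0 ≤ d' := by rw [hd']; positivity
      have hc'q : c' ^ q = x ^ p / S ^ p := by
        rw [hc', ← Real.rpow_mul (by positivity), hpq.sub_one_mul_conj,
          Real.div_rpow hx0.le hS0.le]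
      have hd'q : d' ^ q = y ^ p / S ^ p := by
        rw [hd', ← Real.rpow_mul (by positivity), hpq.sub_one_mul_conj,
          Real.div_rpow hy.le hS0.le]
      have hcdq : c' ^ q + d' ^ q = 1 := by
        rw [hc'q, hd'q, ← add_div, hSp, div_self hxyp.ne']
      have hxx : x ^ p = x * x ^ (p - 1) := by
        nth_rewrite 1 [show p = 1 + (p - 1) by ring]
        rw [Real.rpow_add hx0, Real.rpow_one]
      have hyy : y ^ p = y * y ^ (p - 1) := by
        nth_rewrite 1 [show p = 1 + (p - 1) by ring]
        rw [Real.rpow_add hy, Real.rpow_one]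
      have hSS : S ^ p = S * S ^ (p - 1) := by
        nth_rewrite 1 [show p = 1 + (p - 1) by ring]
        rw [Real.rpow_add hS0, Real.rpow_one]
      have hS1 : (0:ℝ) < S ^ (p - 1) := Real.rpow_pos_of_pos hS0 _
      have heq : x * c' + y * d' = S := by
        rw [hc', hd', Real.div_rpow hx0.le hS0.le, Real.div_rpow hy.le hS0.le]
        calc x * (x ^ (p-1) / S ^ (p-1)) + y * (y ^ (p-1) / S ^ (p-1))
            = (x * x ^ (p-1) + y * y ^ (p-1)) / S ^ (p-1) := by ring
          _ = (x ^ p + y ^ p) / S ^ (p-1) := by rw [← hxx, ← hyy]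
          _ = S := by rw [← hSp, hSS]; field_simp
      have hty : 0 < t ^ p + y ^ p :=
        add_pos_of_nonneg_of_pos (Real.rpow_nonneg ht0 _) (Real.rpow_pos_of_pos hy _)
      have hH : t * c' + y * d' ≤ (t ^ p + y ^ p) ^ (1 / p) :=
        holder2' hpq ht0 hy.le hc'0 hd'0 hty hcdq
      -- c' ≤ v⁻¹
      have hxpT : x ^ p ≤ T ^ p := Real.rpow_le_rpow hx hxT hp0.le
      have hfrac : x ^ p ≤ w * (x ^ p + y ^ p) := by
        have h1 : x ^ p * (1 - w) ≤ y ^ p * (w * (1 - w)⁻¹) * (1 - w) := by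
          rw [hTp] at hxpT
          exact mul_le_mul_of_nonneg_right hxpT h1w.le
        have h2 : y ^ p * (w * (1 - w)⁻¹) * (1 - w) = y ^ p * w := by
          field_simp
        rw [h2] at h1
        linarith only [h1]
      have hxS : (x / S) ^ p ≤ w := by
        rw [Real.div_rpow hx hS0.le, hSp, div_le_iff₀ hxyp]
        linarith [hfrac]
      have hxSw : x / S ≤ w ^ (1 / p) := by
        have h := Real.rpow_le_rpow (Real.rpow_nonneg (by positivity) p) hxS
          (by positivity : (0:ℝ) ≤ 1 / p)
        rw [one_div, Real.rpow_rpow_inv (by positivity) hpne] at h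
        rwa [one_div]
      have h2 : (w ^ (1 / p)) ^ (p - 1) = v⁻¹ := by
        rw [hwdef, ← Real.rpow_mul hv0.le, ← Real.rpow_mul hv0.le,
          show p / (1 - p) * (1 / p) * (p - 1) = -1 by field_simp; ring, Real.rpow_neg_one]
      have hcv : c' ≤ v⁻¹ := by
        rw [hc', ← h2]
        exact Real.rpow_le_rpow (by positivity) hxSw (by linarith)
      calc S = t * c' + y * d' + b * c' := by rw [← heq, ht]; ring
        _ ≤ (t ^ p + y ^ p) ^ (1 / p) + b * v⁻¹ :=
            add_le_add hH (mul_le_mul_of_nonneg_left hcv hb0)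
        _ = b / v + (t ^ p + y ^ p) ^ (1 / p) := by ring
  · -- part (b)
    intro _
    have hx2 : x * v⁻¹ + y * dd ≤ (x ^ p + y ^ p) ^ (1 / p) :=
      holder2' hpq hx hy.le (inv_nonneg.2 hv0.le) hdd0
        (add_pos_of_nonneg_of_pos (Real.rpow_nonneg hx _) (Real.rpow_pos_of_pos hy _)) hcd
    calc (x - T) / v + (T ^ p + y ^ p) ^ (1 / p) = x * v⁻¹ + y * dd := by
          rw [hR, hE]; ring
      _ ≤ _ := hx2
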